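/- arXiv:2111.00226 — 10 statements merged into one kernel-verified Lean document; each statement's English description precedes it below -/
import Mathlib

section
/- Let n > 0, let f : ℤ₂ⁿ → ℤ be an integer-valued weight function, and let A be the adjacency matrix of the weighted cubelike graph Cay(ℤ₂ⁿ, f), i.e. the complex matrix indexed by ℤ₂ⁿ with A u v = f(u + v). Define σ ∈ ℤ₂ⁿ by σᵢ = (∑_{y ∈ ℤ₂ⁿ, yᵢ = 1} f(y)) mod 2. If σ = 0, then Cay(ℤ₂ⁿ, f) is periodic with period π/2: for every vertex u ∈ ℤ₂ⁿ, the transition amplitude satisfies |⟨u| exp(-i(π/2)A) |u⟩| = 1, i.e. the (u,u) entry of the matrix exponential exp(-(i π/2)·A) has absolute value 1. -/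
open Matrix Finset

namespace CLAux

noncomputable def e : ZMod 2 → ℂ := fun a => (-1 : ℂ) ^ a.val

lemma zmod2_cases (a : ZMod 2) : a = 0 ∨ a = 1 := by revert a; decide

lemma e_zero : e 0 = 1 := by simp [e]
lemma e_one : e 1 = -1 := by
  have : (1 : ZMod 2).val = 1 := rfl
  simp [e, this]

lemma one_add_one : (1 : ZMod 2) + 1 = 0 := by decide

lemma e_add (a b : ZMod 2) : e (a + b) = e a * e b := by
  rcases zmod2_cases a with rfl | rfl <;> rcases zmod2_cases b with rfl | rfl <;>
    simp [e_zero, e_one, one_add_one]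

lemma e_sq (a : ZMod 2) : e a * e a = 1 := by
  rcases zmod2_cases a with rfl | rfl <;> simp [e_zero, e_one]

lemma e_sum {ι : Type*} (s : Finset ι) (g : ι → ZMod 2) :
    e (∑ i ∈ s, g i) = ∏ i ∈ s, e (g i) := by
  classical
  induction s using Finset.induction with
  | empty => simp [e_zero]
  | insert h ih => simp_all [e_add]

variable {n : ℕ}

def dot (s u : Fin n → ZMod 2) : ZMod 2 := ∑ i, s i * u i

lemma dot_comm (s u : Fin n → ZMod 2) : dot s u = dot u s := by
  simp [dot, mul_comm]

lemma dot_add_left (s t u : Fin n → ZMod 2) :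
    dot (s + t) u = dot s u + dot t u := by
  simp [dot, add_mul, Finset.sum_add_distrib]

lemma dot_add_right (s u v : Fin n → ZMod 2) :
    dot s (u + v) = dot s u + dot s v := by
  simp [dot, mul_add, Finset.sum_add_distrib]

noncomputable def H (n : ℕ) : Matrix (Fin n → ZMod 2) (Fin n → ZMod 2) ℂ :=
  Matrix.of fun s u => e (dot s u)

lemma sum_char (a : Fin n → ZMod 2) (ha : a ≠ 0) :
    ∑ u : Fin n → ZMod 2, e (dot a u) = 0 := by
  classical
  have h1 : ∀ u : Fin n → ZMod 2, e (dot a u) = ∏ i, e (a i * u i) := fun u =>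
    e_sum _ _
  simp only [h1]
  rw [← Fintype.piFinset_univ,
    ← Finset.prod_univ_sum (fun _ => (Finset.univ : Finset (ZMod 2))) (fun i b => e (a i * b))]
  · obtain ⟨i, hi⟩ : ∃ i, a i ≠ 0 := by
      by_contra h
      push_neg at h
      exact ha (funext h)
    have hi1 : a i = 1 := (zmod2_cases (a i)).resolve_left hi
    apply Finset.prod_eq_zero (Finset.mem_univ i)
    have : (Finset.univ : Finset (ZMod 2)) = {0, 1} := by decide
    rw [this]
    simp [hi1, e_zero, e_one]

lemma sum_char_zero : ∑ u : Fin n → ZMod 2, e (dot (0 : Fin n → ZMod 2) u) = 2 ^ n := by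
  have : ∀ u : Fin n → ZMod 2, dot (0 : Fin n → ZMod 2) u = 0 := by
    intro u; simp [dot]
  simp [this, e_zero, Finset.card_univ]

lemma H_mul_H : H n * H n = (2 ^ n : ℂ) • (1 : Matrix (Fin n → ZMod 2) (Fin n → ZMod 2) ℂ) := by
  classical
  ext s t
  simp only [Matrix.mul_apply, H, Matrix.of_apply, Matrix.smul_apply, Matrix.one_apply]
  have key : ∀ u, e (dot s u) * e (dot u t) = e (dot (s + t) u) := by
    intro u; rw [dot_comm u t, dot_add_left, e_add]
  simp only [key]
  by_cases hst : s = t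
  · subst hst
    have : s + s = 0 := by
      funext i; rcases zmod2_cases (s i) with h | h <;> simp [Pi.add_apply, h, one_add_one]
    rw [this]
    simpa using sum_char_zero
  · have : s + t ≠ 0 := by
      intro h
      apply hst
      funext i
      have := congrFun h i
      rcases zmod2_cases (s i) with h1 | h1 <;> rcases zmod2_cases (t i) with h2 | h2 <;>
        simp_all [Pi.add_apply, one_add_one]
    rw [sum_char _ this]
    simp [hst]

lemma add_self (v : Fin n → ZMod 2) : v + v = 0 := by
  funext i; rcases zmod2_cases (v i) with h | h <;> simp [Pi.add_apply, h, one_add_one]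

/-- integer eigenvalue -/
noncomputable def lam (f : (Fin n → ZMod 2) → ℤ) (s : Fin n → ZMod 2) : ℤ :=
  ∑ y, (-1 : ℤ) ^ (dot s y).val * f y

lemma lam_cast (f : (Fin n → ZMod 2) → ℤ) (s : Fin n → ZMod 2) :
    ((lam f s : ℤ) : ℂ) = ∑ y, e (dot s y) * (f y : ℂ) := by
  unfold lam
  push_cast
  exact Finset.sum_congr rfl fun y _ => rfl

lemma cast_filter_sum (g : (Fin n → ZMod 2) → ℤ) (w : (Fin n → ZMod 2) → ZMod 2) :
    ((∑ y ∈ Finset.univ.filter (fun y => w y = 1), g y : ℤ) : ZMod 2)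
      = ∑ y, w y * ((g y : ℤ) : ZMod 2) := by
  push_cast
  rw [Finset.sum_filter]
  apply Finset.sum_congr rfl
  intro y _
  rcases zmod2_cases (w y) with h | h <;> simp [h]

end CLAux

open CLAux in
theorem cubelike_periodic_of_sigma_zero
    (n : ℕ) (hn : 0 < n) (f : (Fin n → ZMod 2) → ℤ)
    (A : Matrix (Fin n → ZMod 2) (Fin n → ZMod 2) ℂ)
    (hA : ∀ u v, A u v = (f (u + v) : ℂ))
    (σ : Fin n → ZMod 2)
    (hσ : ∀ i, σ i = ((∑ y ∈ Finset.univ.filter (fun y : Fin n → ZMod 2 => y i = 1), f y : ℤ) : ZMod 2))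
    (hσ0 : σ = 0) :
    ∀ u : Fin n → ZMod 2,
      ‖NormedSpace.exp ((-(Complex.I * (Real.pi / 2))) • A) u u‖ = 1 := by
  classical
  intro u
  set c : ℂ := -(Complex.I * (Real.pi / 2)) with hc
  set D : Matrix (Fin n → ZMod 2) (Fin n → ZMod 2) ℂ :=
    Matrix.diagonal (fun s => ((lam f s : ℤ) : ℂ)) with hD
  -- invertibility of H
  have two_pow_ne : (2 ^ n : ℂ) ≠ 0 := pow_ne_zero _ two_ne_zero
  have hinv : H n * ((2 ^ n : ℂ)⁻¹ • H n) = 1 := by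
    rw [Matrix.mul_smul, H_mul_H, smul_smul, inv_mul_cancel₀ two_pow_ne, one_smul]
  have hUnit : IsUnit (H n) :=
    (Matrix.isUnit_iff_isUnit_det _).mpr (Matrix.isUnit_det_of_right_inverse hinv)
  have hHinv : (H n)⁻¹ = (2 ^ n : ℂ)⁻¹ • H n := Matrix.inv_eq_right_inv hinv
  have hinv' : (H n)⁻¹ * H n = 1 := by
    rw [hHinv, Matrix.smul_mul, H_mul_H, smul_smul, inv_mul_cancel₀ two_pow_ne, one_smul]
  -- eigen relation
  have hHA : H n * A = D * H n := by
    ext s v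
    have hR : (D * H n) s v = ((lam f s : ℤ) : ℂ) * e (dot s v) := by
      rw [Matrix.mul_apply, Finset.sum_eq_single s
        (fun b _ hb => by rw [hD, Matrix.diagonal_apply_ne _ (Ne.symm hb), zero_mul])
        (fun h => absurd (Finset.mem_univ s) h)]
      rw [hD, Matrix.diagonal_apply_eq]
      rfl
    rw [hR, Matrix.mul_apply]
    simp only [H, Matrix.of_apply, hA]
    rw [← Fintype.sum_equiv (Equiv.addRight v)
      (fun w => e (dot s w) * e (dot s v) * (f w : ℂ))
      (fun x => e (dot s x) * (f (x + v) : ℂ))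
      (by
        intro w
        simp only [Equiv.coe_addRight]
        rw [dot_add_right, e_add, add_assoc, add_self, add_zero])]
    rw [lam_cast, Finset.sum_mul]
    apply Finset.sum_congr rfl
    intro y _
    ring
  have hAeq : A = (H n)⁻¹ * (D * H n) := by
    calc A = ((H n)⁻¹ * H n) * A := by rw [hinv', one_mul]
    _ = (H n)⁻¹ * (H n * A) := by rw [Matrix.mul_assoc]
    _ = (H n)⁻¹ * (D * H n) := by rw [hHA]
  have hcA : c • A = (H n)⁻¹ * (c • D) * H n := by
    rw [hAeq, ← Matrix.mul_assoc, Matrix.mul_smul, Matrix.smul_mul]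
  -- exp computation
  have hexp : NormedSpace.exp (c • A)
      = (H n)⁻¹ * Matrix.diagonal (fun s => Complex.exp (c * ((lam f s : ℤ) : ℂ))) * H n := by
    rw [hcA, Matrix.exp_conj' (H n) (c • D) hUnit]
    congr 1
    congr 1
    have : c • D = Matrix.diagonal (fun s => c * ((lam f s : ℤ) : ℂ)) := by
      rw [hD, ← Matrix.diagonal_smul]
      congr 1
    rw [this, Matrix.exp_diagonal]
    congr 1
    funext s
    rw [Pi.exp_def, ← Complex.exp_eq_exp_ℂ]
  -- all exponentials agree
  have key : ∀ s, Complex.exp (c * ((lam f s : ℤ) : ℂ))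
      = Complex.exp (c * ((lam f 0 : ℤ) : ℂ)) := by
    intro s
    set T : ℤ := ∑ y ∈ Finset.univ.filter (fun y : Fin n → ZMod 2 => dot s y = 1), f y with hT
    have hlam : lam f 0 - lam f s = 2 * T := by
      rw [hT, Finset.mul_sum, Finset.sum_filter]
      unfold lam
      rw [← Finset.sum_sub_distrib]
      apply Finset.sum_congr rfl
      intro y _
      have h0 : dot (0 : Fin n → ZMod 2) y = 0 := by simp [dot]
      rcases zmod2_cases (dot s y) with h | h
      · have : (0 : ZMod 2) ≠ 1 := by decide
        simp [h, h0, this]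
      · have hval : (1 : ZMod 2).val = 1 := rfl
        simp [h, h0, hval]
        ring
    -- T is even
    have hTeven : ((T : ℤ) : ZMod 2) = 0 := by
      rw [hT, cast_filter_sum f (fun y => dot s y)]
      have expand : ∀ y : Fin n → ZMod 2,
          dot s y * ((f y : ℤ) : ZMod 2) = ∑ i, s i * (y i * ((f y : ℤ) : ZMod 2)) := by
        intro y
        rw [dot, Finset.sum_mul]
        apply Finset.sum_congr rfl
        intro i _
        ring
      simp only [expand]
      rw [Finset.sum_comm]
      have : ∀ i : Fin n, ∑ y : Fin n → ZMod 2, s i * (y i * ((f y : ℤ) : ZMod 2)) = 0 := by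
        intro i
        rw [← Finset.mul_sum]
        have hσi : ∑ y : Fin n → ZMod 2, y i * ((f y : ℤ) : ZMod 2) = 0 := by
          rw [← cast_filter_sum f (fun y => y i), ← hσ i, hσ0]
          rfl
        rw [hσi, mul_zero]
      simp [this]
    obtain ⟨k, hk⟩ : (2 : ℤ) ∣ T := by
      rwa [ZMod.intCast_zmod_eq_zero_iff_dvd T 2] at hTeven
    have hlam' : (lam f s : ℤ) = lam f 0 - 4 * k := by omega
    rw [hlam']
    push_cast
    rw [mul_sub, Complex.exp_sub]
    have : c * (4 * (k : ℂ)) = -((k : ℂ) * (2 * Real.pi * Complex.I)) := by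
      rw [hc]; push_cast; ring
    rw [this, Complex.exp_neg, Complex.exp_int_mul_two_pi_mul_I k]
    simp
  -- diagonal entry
  have hentry : NormedSpace.exp (c • A) u u = Complex.exp (c * ((lam f 0 : ℤ) : ℂ)) := by
    rw [hexp, hHinv]
    rw [Matrix.mul_assoc, Matrix.smul_mul, Matrix.smul_apply]
    rw [Matrix.mul_apply]
    have : ∀ s, H n u s * (Matrix.diagonal (fun s => Complex.exp (c * ((lam f s : ℤ) : ℂ))) * H n) s u
        = Complex.exp (c * ((lam f 0 : ℤ) : ℂ)) := by
      intro s
      rw [Matrix.diagonal_mul]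
      rw [key s]
      have : H n u s * H n s u = 1 := by
        simp only [H, Matrix.of_apply]
        rw [dot_comm u s, e_sq]
      calc H n u s * (Complex.exp (c * ((lam f 0 : ℤ) : ℂ)) * H n s u)
          = (H n u s * H n s u) * Complex.exp (c * ((lam f 0 : ℤ) : ℂ)) := by ring
        _ = Complex.exp (c * ((lam f 0 : ℤ) : ℂ)) := by rw [this, one_mul]
    simp only [this]
    rw [Finset.sum_const, Finset.card_univ]
    have hcard : Fintype.card (Fin n → ZMod 2) = 2 ^ n := by
      simp [Fintype.card_fun]
    rw [hcard]
    rw [nsmul_eq_mul, smul_eq_mul, ← mul_assoc]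
    push_cast
    rw [inv_mul_cancel₀ two_pow_ne, one_mul]
  rw [hentry, Complex.norm_exp]
  have : (c * ((lam f 0 : ℤ) : ℂ)).re = 0 := by
    rw [hc]
    simp [Complex.mul_re, Complex.mul_im]
  rw [this, Real.exp_zero]
end

section
/- Let n > 0, let f : ℤ₂ⁿ → ℤ, and let A be the adjacency matrix of Cay(ℤ₂ⁿ, f), i.e. A u v = f(u + v). Define σ ∈ ℤ₂ⁿ by σᵢ = (∑_{y ∈ ℤ₂ⁿ, yᵢ = 1} f(y)) mod 2. Then the evolution operator at time π/2 is, up to a global phase, the translation by σ: there exists λ ∈ ℂ with |λ| = 1 such that exp(-(i π/2)·A) = λ • ρ(σ), where ρ(σ) is the permutation matrix with entries ρ(σ) u v = 1 if u = σ + v and 0 otherwise. -/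
open Matrix Finset

namespace CubelikeAux
variable {n : ℕ}

noncomputable def chi (s u : Fin n → ZMod 2) : ℂ := (-1 : ℂ) ^ (∑ i, s i * u i).val

lemma neg_one_pow_val_add (a b : ZMod 2) :
    ((-1:ℂ)) ^ (a+b).val = (-1:ℂ)^a.val * (-1:ℂ)^b.val := by
  rcases (by decide : ∀ a : ZMod 2, a = 0 ∨ a = 1) a with rfl | rfl <;>
    rcases (by decide : ∀ a : ZMod 2, a = 0 ∨ a = 1) b with rfl | rfl <;>
    norm_num [show ZMod.val (2:ZMod 2) = 0 from rfl, show ZMod.val (1:ZMod 2) = 1 from rfl,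
      show ZMod.val (0:ZMod 2) = 0 from rfl]

lemma chi_add_right (s u v : Fin n → ZMod 2) : chi s (u+v) = chi s u * chi s v := by
  unfold chi
  rw [show (∑ i, s i * (u+v) i) = (∑ i, s i * u i) + (∑ i, s i * v i) by
    rw [← Finset.sum_add_distrib]; exact Finset.sum_congr rfl fun i _ => by
      simp [mul_add]]
  exact neg_one_pow_val_add _ _

lemma chi_comm (s u : Fin n → ZMod 2) : chi s u = chi u s := by
  unfold chi
  rw [show (∑ i, s i * u i) = ∑ i, u i * s i from Finset.sum_congr rfl fun i _ => mul_comm _ _]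

lemma add_self' (u : Fin n → ZMod 2) : u + u = 0 := by
  funext i
  have : ∀ a : ZMod 2, a + a = 0 := by decide
  simpa using this (u i)

lemma addEqZeroIff (u v : Fin n → ZMod 2) : u + v = 0 ↔ u = v := by
  constructor
  · intro h
    have := congrArg (· + v) h
    simpa [add_assoc, add_self'] using this
  · rintro rfl; exact add_self' u

lemma eq_add_iff' (u x w : Fin n → ZMod 2) : u = x + w ↔ w = x + u := by
  constructor
  · rintro rfl; rw [← add_assoc, add_self', zero_add]
  · rintro rfl; rw [← add_assoc, add_self', zero_add]

lemma chi_zero_right (s : Fin n → ZMod 2) : chi s 0 = 1 := by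
  unfold chi; simp

lemma sum_chi (w : Fin n → ZMod 2) :
    ∑ s, chi s w = if w = 0 then ((2:ℂ)^n) else 0 := by
  split_ifs with h
  · subst h
    rw [Finset.sum_congr rfl (fun s _ => chi_zero_right s), Finset.sum_const, Finset.card_univ]
    rw [show (Fintype.card (Fin n → ZMod 2)) = 2^n by simp]
    push_cast; ring
  · obtain ⟨i, hi⟩ : ∃ i, w i ≠ 0 := by
      by_contra hc; push_neg at hc; exact h (funext hc)
    have hwi : w i = 1 := by
      have : ∀ a : ZMod 2, a ≠ 0 → a = 1 := by decide
      exact this _ hi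
    set e : Fin n → ZMod 2 := Pi.single i 1 with he
    have hchie : chi e w = -1 := by
      unfold chi
      rw [show (∑ j, e j * w j) = 1 by
        rw [Finset.sum_eq_single i]
        · simp [he, hwi]
        · intro j _ hj; simp [he, Pi.single_eq_of_ne hj]
        · simp]
      norm_num [show ZMod.val (1:ZMod 2) = 1 from rfl]
    have key : ∑ s, chi s w = ∑ s, chi (s + e) w :=
      (Fintype.sum_equiv (Equiv.addRight e) _ _ (fun s => rfl)).symm
    have key2 : ∑ s, chi (s + e) w = -∑ s, chi s w := by
      rw [← Finset.sum_neg_distrib]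
      refine Finset.sum_congr rfl fun s _ => ?_
      rw [show chi (s+e) w = chi w (s+e) from chi_comm _ _, chi_add_right,
        show chi w s = chi s w from chi_comm _ _, show chi w e = chi e w from chi_comm _ _, hchie]
      ring
    have : ∑ s, chi s w = -∑ s, chi s w := key.trans key2
    linear_combination this / 2

lemma neg_one_zpow_eq (m : ℤ) (a : ZMod 2) (h : (m : ZMod 2) = a) :
    (-1:ℂ)^m = (-1:ℂ)^a.val := by
  rcases Int.even_or_odd m with he | ho
  · obtain ⟨k, hk⟩ := id he
    have ha : a = 0 := by
      rw [← h, hk]; push_cast; ring_nf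
      rw [show ((2:ZMod 2)) = 0 by decide, mul_zero]
    rw [ha, he.neg_one_zpow]
    norm_num [show ZMod.val (0:ZMod 2) = 0 from rfl]
  · obtain ⟨k, hk⟩ := id ho
    have ha : a = 1 := by
      rw [← h, hk]; push_cast; ring_nf
      rw [show ((2:ZMod 2)) = 0 by decide, mul_zero, add_zero]
    rw [ha, ho.neg_one_zpow]
    norm_num [show ZMod.val (1:ZMod 2) = 1 from rfl]

lemma parity (f : (Fin n → ZMod 2) → ℤ) (σ : Fin n → ZMod 2) (s : Fin n → ZMod 2)
    (hσ : ∀ i, σ i = ((∑ y ∈ Finset.univ.filter (fun y : Fin n → ZMod 2 => y i = 1), f y : ℤ) : ZMod 2)) :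
    (((∑ y ∈ Finset.univ.filter (fun y : Fin n → ZMod 2 => (∑ i, s i * y i) = 1), f y : ℤ)) : ZMod 2)
      = ∑ i, s i * σ i := by
  have lhs_eq : (((∑ y ∈ Finset.univ.filter (fun y : Fin n → ZMod 2 => (∑ i, s i * y i) = 1), f y : ℤ)) : ZMod 2)
      = ∑ y : Fin n → ZMod 2, (∑ i, s i * y i) * ((f y : ℤ) : ZMod 2) := by
    push_cast
    rw [← Finset.sum_filter_add_sum_filter_not Finset.univ (fun y : Fin n → ZMod 2 => (∑ i, s i * y i) = 1)]
    rw [show (∑ y ∈ Finset.univ.filter (fun y : Fin n → ZMod 2 => ¬ (∑ i, s i * y i) = 1),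
        (∑ i, s i * y i) * ((f y : ℤ) : ZMod 2)) = 0 by
      apply Finset.sum_eq_zero; intro y hy
      simp only [Finset.mem_filter] at hy
      have : (∑ i, s i * y i) = 0 := by
        have : ∀ a : ZMod 2, a ≠ 1 → a = 0 := by decide
        exact this _ hy.2
      rw [this]; ring]
    rw [add_zero]
    refine Finset.sum_congr rfl fun y hy => ?_
    simp only [Finset.mem_filter] at hy
    rw [hy.2, one_mul]
  rw [lhs_eq]
  have rhs_eq : ∀ i, σ i = ∑ y : Fin n → ZMod 2, y i * ((f y : ℤ) : ZMod 2) := by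
    intro i
    rw [hσ i]; push_cast
    rw [← Finset.sum_filter_add_sum_filter_not Finset.univ (fun y : Fin n → ZMod 2 => y i = 1)
      (fun y => y i * ((f y : ℤ) : ZMod 2))]
    rw [show (∑ y ∈ Finset.univ.filter (fun y : Fin n → ZMod 2 => ¬ y i = 1),
        y i * ((f y : ℤ) : ZMod 2)) = 0 by
      apply Finset.sum_eq_zero; intro y hy
      simp only [Finset.mem_filter] at hy
      have h0 : y i = 0 := by
        have : ∀ a : ZMod 2, a ≠ 1 → a = 0 := by decide
        exact this _ hy.2
      rw [h0]; ring]
    rw [add_zero]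
    refine Finset.sum_congr rfl fun y hy => ?_
    simp only [Finset.mem_filter] at hy
    rw [hy.2, one_mul]
  calc ∑ y : Fin n → ZMod 2, (∑ i, s i * y i) * ((f y : ℤ) : ZMod 2)
      = ∑ y : Fin n → ZMod 2, ∑ i, s i * (y i * ((f y : ℤ) : ZMod 2)) := by
        refine Finset.sum_congr rfl fun y _ => ?_
        rw [Finset.sum_mul]; exact Finset.sum_congr rfl fun i _ => by ring
    _ = ∑ i, ∑ y : Fin n → ZMod 2, s i * (y i * ((f y : ℤ) : ZMod 2)) := Finset.sum_comm
    _ = ∑ i, s i * σ i := by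
        refine Finset.sum_congr rfl fun i _ => ?_
        rw [← Finset.mul_sum, ← rhs_eq i]

end CubelikeAux

open CubelikeAux in
theorem cubelike_evolution_eq_phase_smul_translation
    (n : ℕ) (hn : 0 < n) (f : (Fin n → ZMod 2) → ℤ)
    (A : Matrix (Fin n → ZMod 2) (Fin n → ZMod 2) ℂ)
    (hA : ∀ u v, A u v = (f (u + v) : ℂ))
    (σ : Fin n → ZMod 2)
    (hσ : ∀ i, σ i = ((∑ y ∈ Finset.univ.filter (fun y : Fin n → ZMod 2 => y i = 1), f y : ℤ) : ZMod 2))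
    (ρ : (Fin n → ZMod 2) → Matrix (Fin n → ZMod 2) (Fin n → ZMod 2) ℂ)
    (hρ : ∀ x u v, ρ x u v = if u = x + v then 1 else 0) :
    ∃ lam : ℂ, ‖lam‖ = 1 ∧
      NormedSpace.exp ((-(Complex.I * (Real.pi / 2))) • A) = lam • ρ σ := by
  set c : ℂ := -(Complex.I * (Real.pi / 2)) with hc
  set lam : (Fin n → ZMod 2) → ℂ := fun s => ∑ y, (f y : ℂ) * chi s y with hlam
  set H : Matrix (Fin n → ZMod 2) (Fin n → ZMod 2) ℂ := Matrix.of fun u s => chi s u with hH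
  have hpow : ((2:ℂ)^n) ≠ 0 := pow_ne_zero _ two_ne_zero
  have hHH : H * H = ((2:ℂ)^n) • (1 : Matrix (Fin n → ZMod 2) (Fin n → ZMod 2) ℂ) := by
    ext u v
    rw [Matrix.mul_apply]
    calc ∑ s, H u s * H s v = ∑ s, chi s (u + v) := by
          refine Finset.sum_congr rfl fun s _ => ?_
          rw [hH]
          show chi s u * chi v s = chi s (u+v)
          rw [show chi v s = chi s v from chi_comm _ _, ← chi_add_right]
      _ = if u = v then (2:ℂ)^n else 0 := by rw [sum_chi]; simp only [addEqZeroIff]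
      _ = ((2:ℂ)^n • (1 : Matrix (Fin n → ZMod 2) (Fin n → ZMod 2) ℂ)) u v := by
          rw [Matrix.smul_apply, Matrix.one_apply]; split_ifs <;> simp
  set U : (Matrix (Fin n → ZMod 2) (Fin n → ZMod 2) ℂ)ˣ :=
    ⟨H, ((2:ℂ)^n)⁻¹ • H,
      by rw [Matrix.mul_smul, hHH, smul_smul, inv_mul_cancel₀ hpow, one_smul],
      by rw [Matrix.smul_mul, hHH, smul_smul, inv_mul_cancel₀ hpow, one_smul]⟩ with hU
  have conj : ∀ (B : Matrix (Fin n → ZMod 2) (Fin n → ZMod 2) ℂ)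
      (D : Matrix (Fin n → ZMod 2) (Fin n → ZMod 2) ℂ),
      B * H = H * D → B = (U : Matrix (Fin n → ZMod 2) (Fin n → ZMod 2) ℂ) * D
        * ((U⁻¹ : (Matrix (Fin n → ZMod 2) (Fin n → ZMod 2) ℂ)ˣ) : Matrix (Fin n → ZMod 2) (Fin n → ZMod 2) ℂ) := by
    intro B D h
    have h2 : (U : Matrix (Fin n → ZMod 2) (Fin n → ZMod 2) ℂ) * D
        * ((U⁻¹ : (Matrix (Fin n → ZMod 2) (Fin n → ZMod 2) ℂ)ˣ) : Matrix (Fin n → ZMod 2) (Fin n → ZMod 2) ℂ)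
        = (B * (U : Matrix (Fin n → ZMod 2) (Fin n → ZMod 2) ℂ))
        * ((U⁻¹ : (Matrix (Fin n → ZMod 2) (Fin n → ZMod 2) ℂ)ˣ) : Matrix (Fin n → ZMod 2) (Fin n → ZMod 2) ℂ) := by
      rw [show (B * (U : Matrix (Fin n → ZMod 2) (Fin n → ZMod 2) ℂ)) = (U : Matrix (Fin n → ZMod 2) (Fin n → ZMod 2) ℂ) * D from h]
    rw [h2, mul_assoc]
    rw [show ((U : Matrix (Fin n → ZMod 2) (Fin n → ZMod 2) ℂ)
      * ((U⁻¹ : (Matrix (Fin n → ZMod 2) (Fin n → ZMod 2) ℂ)ˣ) : Matrix (Fin n → ZMod 2) (Fin n → ZMod 2) ℂ)) = 1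
      from U.mul_inv, mul_one]
  have hAH : A * H = H * Matrix.diagonal lam := by
    ext u s
    rw [Matrix.mul_apply, Matrix.mul_diagonal]
    calc ∑ w, A u w * H w s = ∑ w, (f (u + w) : ℂ) * chi s w := by
          refine Finset.sum_congr rfl fun w _ => by rw [hA, hH]; rfl
      _ = ∑ y, (f (u + (u + y)) : ℂ) * chi s (u + y) :=
          (Equiv.sum_comp (Equiv.addLeft u) (fun w => (f (u+w) : ℂ) * chi s w)).symm
      _ = ∑ y, (f y : ℂ) * (chi s u * chi s y) := by
          refine Finset.sum_congr rfl fun y _ => ?_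
          rw [← add_assoc, add_self', zero_add, chi_add_right]
      _ = H u s * lam s := by
          rw [hH, hlam]
          show _ = chi s u * ∑ y, (f y : ℂ) * chi s y
          rw [Finset.mul_sum]
          exact Finset.sum_congr rfl fun y _ => by ring
  have hρH : ρ σ * H = H * Matrix.diagonal (fun s => chi s σ) := by
    ext u s
    rw [Matrix.mul_apply, Matrix.mul_diagonal]
    calc ∑ w, ρ σ u w * H w s
        = ∑ w, (if w = σ + u then chi s w else 0) := by
          refine Finset.sum_congr rfl fun w _ => ?_
          rw [hρ, hH]
          show (if u = σ + w then (1:ℂ) else 0) * chi s w = _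
          by_cases hw : w = σ + u
          · have h1 : u = σ + w := (eq_add_iff' u σ w).mpr hw
            rw [if_pos h1, if_pos hw, one_mul]
          · have h1 : ¬ u = σ + w := fun h => hw ((eq_add_iff' u σ w).mp h)
            rw [if_neg h1, if_neg hw, zero_mul]
      _ = chi s (σ + u) := by rw [Finset.sum_ite_eq' Finset.univ (σ + u) (fun w => chi s w)]; simp
      _ = H u s * chi s σ := by
          rw [chi_add_right, hH]
          show _ = chi s u * chi s σ
          ring
  have hAconj := conj A _ hAH
  have hρconj := conj (ρ σ) _ hρH
  -- scalar identity
  set lam0 : ℂ := Complex.exp (c * (∑ y, (f y : ℂ))) with hlam0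
  have key_s : ∀ s, Complex.exp (c * lam s) = lam0 * chi s σ := by
    intro s
    set N : ℤ := ∑ y ∈ Finset.univ.filter (fun y : Fin n → ZMod 2 => (∑ i, s i * y i) = 1), f y with hN
    have hsplit : lam s = (∑ y, (f y : ℂ)) - 2 * (N : ℂ) := by
      rw [hlam]
      show ∑ y, (f y : ℂ) * chi s y = _
      rw [← Finset.sum_filter_add_sum_filter_not Finset.univ
        (fun y : Fin n → ZMod 2 => (∑ i, s i * y i) = 1) (fun y => (f y : ℂ) * chi s y),
        ← Finset.sum_filter_add_sum_filter_not Finset.univ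
        (fun y : Fin n → ZMod 2 => (∑ i, s i * y i) = 1) (fun y => (f y : ℂ))]
      rw [show (∑ y ∈ Finset.univ.filter (fun y : Fin n → ZMod 2 => (∑ i, s i * y i) = 1),
          (f y : ℂ) * chi s y) = -(N : ℂ) by
        rw [hN]; push_cast
        rw [← Finset.sum_neg_distrib]
        refine Finset.sum_congr rfl fun y hy => ?_
        simp only [Finset.mem_filter] at hy
        unfold chi
        rw [hy.2]
        norm_num [show ZMod.val (1:ZMod 2) = 1 from rfl]]
      rw [show (∑ y ∈ Finset.univ.filter (fun y : Fin n → ZMod 2 => ¬(∑ i, s i * y i) = 1),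
          (f y : ℂ) * chi s y) = ∑ y ∈ Finset.univ.filter (fun y : Fin n → ZMod 2 => ¬(∑ i, s i * y i) = 1),
          (f y : ℂ) by
        refine Finset.sum_congr rfl fun y hy => ?_
        simp only [Finset.mem_filter] at hy
        have h0 : (∑ i, s i * y i) = 0 := by
          have : ∀ a : ZMod 2, a ≠ 1 → a = 0 := by decide
          exact this _ hy.2
        unfold chi
        rw [h0]
        norm_num [show ZMod.val (0:ZMod 2) = 0 from rfl]]
      have : (∑ y ∈ Finset.univ.filter (fun y : Fin n → ZMod 2 => (∑ i, s i * y i) = 1), (f y : ℂ))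
          = (N : ℂ) := by rw [hN]; push_cast; rfl
      rw [this]; ring
    have hchi : chi s σ = (-1:ℂ)^N := by
      rw [show ((-1:ℂ)^N) = (-1:ℂ)^((∑ i, s i * σ i).val) from
        neg_one_zpow_eq N _ (parity f σ s hσ)]
      rfl
    rw [hsplit, mul_sub, Complex.exp_sub, hchi]
    rw [show c * (2 * (N:ℂ)) = -((N:ℂ) * (Real.pi * Complex.I)) by rw [hc]; push_cast; ring]
    rw [Complex.exp_neg]
    rw [Complex.exp_int_mul, Complex.exp_pi_mul_I]
    rw [div_eq_mul_inv, inv_inv]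
  -- assemble
  refine ⟨lam0, ?_, ?_⟩
  · rw [hlam0]
    have : c * (∑ y, (f y : ℂ)) = ((-(Real.pi/2) * (∑ y, (f y : ℤ)) : ℝ) : ℂ) * Complex.I := by
      rw [hc]; push_cast; ring
    rw [this, Complex.norm_exp_ofReal_mul_I]
  · have hsmul : c • A = (U : Matrix (Fin n → ZMod 2) (Fin n → ZMod 2) ℂ) * Matrix.diagonal (c • lam)
        * ((U⁻¹ : (Matrix (Fin n → ZMod 2) (Fin n → ZMod 2) ℂ)ˣ) : Matrix (Fin n → ZMod 2) (Fin n → ZMod 2) ℂ) := by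
      rw [hAconj, Matrix.diagonal_smul]
      simp only [smul_mul_assoc, mul_smul_comm, mul_assoc]
    rw [hsmul, Matrix.exp_units_conj U (Matrix.diagonal (c • lam)), Matrix.exp_diagonal]
    have hdiag : (NormedSpace.exp (c • lam)) = lam0 • fun s => chi s σ := by
      funext s
      rw [Pi.coe_exp, Pi.smul_apply, smul_eq_mul, Pi.smul_apply, smul_eq_mul,
        ← Complex.exp_eq_exp_ℂ, key_s s]
    rw [hdiag, Matrix.diagonal_smul, hρconj]
    simp only [smul_mul_assoc, mul_smul_comm, mul_assoc]
end

section
/- Let n > 0, f : ℤ₂ⁿ → ℤ, and let A u v = f(u + v) be the adjacency matrix of Cay(ℤ₂ⁿ, f). Then for every t ∈ ℝ, the evolution operator factors as a product over the group: exp(-(i t)·A) = ∏_{x ∈ ℤ₂ⁿ} exp(-(i t f(x))·ρ(x)), where ρ(x) is the permutation matrix with entries ρ(x) u v = 1 if u = x + v and 0 otherwise. -/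
open Matrix Finset

theorem cubelike_evolution_factorization
    (n : ℕ) (hn : 0 < n) (f : (Fin n → ZMod 2) → ℤ)
    (A : Matrix (Fin n → ZMod 2) (Fin n → ZMod 2) ℂ)
    (hA : ∀ u v, A u v = (f (u + v) : ℂ))
    (ρ : (Fin n → ZMod 2) → Matrix (Fin n → ZMod 2) (Fin n → ZMod 2) ℂ)
    (hρ : ∀ x u v, ρ x u v = if u = x + v then 1 else 0)
    (t : ℝ)
    (hc : ((Finset.univ : Finset (Fin n → ZMod 2)) : Set (Fin n → ZMod 2)).Pairwise
      (Function.onFun Commute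
        (fun x => NormedSpace.exp ((-(Complex.I * t * (f x : ℂ))) • ρ x)))) :
    NormedSpace.exp ((-(Complex.I * t)) • A) =
      Finset.univ.noncommProd
        (fun x => NormedSpace.exp ((-(Complex.I * t * (f x : ℂ))) • ρ x)) hc := by
  have hρmul : ∀ x y, ρ x * ρ y = ρ (x + y) := by
    intro x y
    ext u v
    simp only [Matrix.mul_apply, hρ]
    rw [Finset.sum_eq_single (x + u)]
    · simp only [ite_mul, one_mul, zero_mul]
      have h1 : u = x + (x + u) := by
        rw [← add_assoc]
        have : x + x = 0 := by
          funext i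
          simp [CharTwo.add_self_eq_zero (x i)]
        simp [this]
      rw [if_pos h1]
      by_cases h : x + u = y + v
      · rw [if_pos h, if_pos]
        rw [h1, h, ← add_assoc]
      · rw [if_neg h, if_neg]
        intro hu
        apply h
        have hxx : x + x = 0 := by
          funext i; simp [CharTwo.add_self_eq_zero (x i)]
        rw [hu, ← add_assoc, ← add_assoc, hxx, zero_add]
    · intro w _ hw
      have : ¬ u = x + w := by
        intro h
        apply hw
        have hxx : x + x = 0 := by
          funext i; simp [CharTwo.add_self_eq_zero (x i)]
        rw [h, ← add_assoc, hxx, zero_add]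
      simp [this]
    · simp
  have hcomm : ((Finset.univ : Finset (Fin n → ZMod 2)) : Set (Fin n → ZMod 2)).Pairwise
      (Function.onFun Commute (fun x => (-(Complex.I * t * (f x : ℂ))) • ρ x)) := by
    intro x _ y _ _
    simp only [Function.onFun]
    apply Commute.smul_left
    apply Commute.smul_right
    show ρ x * ρ y = ρ y * ρ x
    rw [hρmul, hρmul, add_comm]
  have hsum : (-(Complex.I * t)) • A = ∑ x, (-(Complex.I * t * (f x : ℂ))) • ρ x := by
    ext u v
    simp only [Matrix.smul_apply, Matrix.sum_apply, hA, hρ, smul_eq_mul, mul_ite, mul_one,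
      mul_zero]
    rw [Finset.sum_eq_single (u + v)]
    · have : u = (u + v) + v := by
        have hvv : v + v = 0 := by
          funext i; simp [CharTwo.add_self_eq_zero (v i)]
        rw [add_assoc, hvv, add_zero]
      rw [if_pos this]; ring
    · intro w _ hw
      rw [if_neg, ]
      intro h
      apply hw
      have hvv : v + v = 0 := by
        funext i; simp [CharTwo.add_self_eq_zero (v i)]
      rw [h, add_assoc, hvv, add_zero]
    · simp
  rw [hsum]
  exact Matrix.exp_sum_of_commute (𝔸 := ℂ) _ _ hcomm
end

section
/- Let n > 0, x ∈ ℤ₂ⁿ, c ∈ ℝ, and t ∈ ℝ. With H_n the n-qubit Hadamard matrix (entries H_n u v = (-1)^{⟨u,v⟩}/√(2ⁿ)) and D_x the diagonal matrix with entries D_x u u = (-1)^{⟨x,u⟩}, the evolution factor satisfies exp(-(i t c) • ρ(x)) = H_n * exp(-(i t c) • D_x) * H_n, where ρ(x) is the translation permutation matrix. -/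
open Matrix Finset

lemma char_add (s t : ZMod 2) :
    (-1 : ℂ) ^ (s + t).val = (-1 : ℂ) ^ s.val * (-1 : ℂ) ^ t.val := by
  rw [ZMod.val_add, ← pow_add]; exact (neg_one_pow_eq_pow_mod_two _).symm

lemma char_finsum {ι : Type*} (s : Finset ι) (f : ι → ZMod 2) :
    (-1 : ℂ) ^ (∑ i ∈ s, f i).val = ∏ i ∈ s, (-1 : ℂ) ^ (f i).val := by
  induction s using Finset.cons_induction with
  | empty => simp [show ((0:ZMod 2)).val = 0 from rfl]
  | cons i s hi ih => rw [Finset.sum_cons, Finset.prod_cons, char_add, ih]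

lemma char_single (b : ZMod 2) :
    ∑ s : ZMod 2, (-1 : ℂ) ^ (b * s).val = if b = 0 then 2 else 0 := by
  rw [show (univ : Finset (ZMod 2)) = {0, 1} from by decide]
  rcases (by decide : ∀ b : ZMod 2, b = 0 ∨ b = 1) b with rfl | rfl <;>
    norm_num [ZMod.val_one]

lemma char_sum (n : ℕ) (a : Fin n → ZMod 2) :
    ∑ w : Fin n → ZMod 2, (-1 : ℂ) ^ (∑ i, a i * w i : ZMod 2).val
      = if a = 0 then (2 : ℂ) ^ n else 0 := by
  have h1 : ∀ w : Fin n → ZMod 2,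
      (-1 : ℂ) ^ (∑ i, a i * w i : ZMod 2).val
        = ∏ i, (-1 : ℂ) ^ (a i * w i : ZMod 2).val := fun w => char_finsum _ _
  simp_rw [h1]
  have h2 := Finset.prod_univ_sum (fun _ : Fin n => (univ : Finset (ZMod 2)))
    (fun i s => (-1 : ℂ) ^ (a i * s : ZMod 2).val)
  rw [Fintype.piFinset_univ] at h2
  rw [← h2]
  simp_rw [char_single]
  by_cases ha : a = 0
  · simp [ha]
  · rw [if_neg ha]
    obtain ⟨i, hi⟩ : ∃ i, a i ≠ 0 := by
      by_contra h
      push_neg at h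
      exact ha (funext h)
    exact Finset.prod_eq_zero (mem_univ i) (by simp [hi])

theorem exp_translation_eq_hadamard_conj_exp
    (n : ℕ) (hn : 0 < n) (x : Fin n → ZMod 2) (c t : ℝ)
    (H : Matrix (Fin n → ZMod 2) (Fin n → ZMod 2) ℂ)
    (hH : ∀ u v, H u v = (-1 : ℂ) ^ (∑ i, u i * v i : ZMod 2).val / Real.sqrt (2 ^ n))
    (D : Matrix (Fin n → ZMod 2) (Fin n → ZMod 2) ℂ)
    (hD : ∀ u v, D u v = if u = v then (-1 : ℂ) ^ (∑ i, x i * u i : ZMod 2).val else 0)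
    (ρ : Matrix (Fin n → ZMod 2) (Fin n → ZMod 2) ℂ)
    (hρ : ∀ u v, ρ u v = if u = x + v then 1 else 0) :
    NormedSpace.exp ((-(Complex.I * t * c)) • ρ) =
      H * NormedSpace.exp ((-(Complex.I * t * c)) • D) * H := by
  have hsq : (Real.sqrt (2 ^ n) : ℂ) * (Real.sqrt (2 ^ n) : ℂ) = (2 : ℂ) ^ n := by
    rw [← Complex.ofReal_mul, Real.mul_self_sqrt (by positivity : (0:ℝ) ≤ 2 ^ n)]
    norm_cast
  have h2n : ((2 : ℂ) ^ n) ≠ 0 := pow_ne_zero _ two_ne_zero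
  have hpair : ∀ a b : ZMod 2, a + b = 0 ↔ a = b := by decide
  -- H * H = 1
  have hHH : H * H = 1 := by
    ext u v
    rw [Matrix.mul_apply]
    have hcomb : ∀ w : Fin n → ZMod 2,
        (-1 : ℂ) ^ (∑ i, u i * w i : ZMod 2).val * (-1 : ℂ) ^ (∑ i, w i * v i : ZMod 2).val
          = (-1 : ℂ) ^ (∑ i, (u + v) i * w i : ZMod 2).val := by
      intro w
      rw [← char_add]
      apply congrArg (fun s : ZMod 2 => (-1 : ℂ) ^ s.val)
      rw [← Finset.sum_add_distrib]
      refine Finset.sum_congr rfl fun i _ => ?_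
      simp only [Pi.add_apply]
      ring
    have hterm : ∀ w : Fin n → ZMod 2, H u w * H w v
        = (-1 : ℂ) ^ (∑ i, (u + v) i * w i : ZMod 2).val / (2 : ℂ) ^ n := by
      intro w
      rw [hH, hH, ← hcomb w, ← hsq]
      ring
    simp_rw [hterm]
    rw [← Finset.sum_div, char_sum]
    have hiff : u + v = 0 ↔ u = v := by
      constructor
      · intro h; funext i; exact (hpair _ _).1 (congrFun h i)
      · intro h; funext i; exact (hpair _ _).2 (congrFun h i)
    by_cases huv : u = v
    · subst huv
      rw [if_pos (hiff.2 rfl), Matrix.one_apply_eq, div_self h2n]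
    · rw [if_neg (fun h => huv (hiff.1 h)), Matrix.one_apply_ne huv, zero_div]
  -- ρ = H * D * H
  have hDdiag : D = Matrix.diagonal (fun u => (-1 : ℂ) ^ (∑ i, x i * u i : ZMod 2).val) := by
    ext u v
    rw [hD, Matrix.diagonal_apply]
  have hρ' : ρ = H * D * H := by
    rw [hDdiag]
    ext u v
    rw [Matrix.mul_apply, hρ]
    have hcomb : ∀ w : Fin n → ZMod 2,
        ((-1 : ℂ) ^ (∑ i, u i * w i : ZMod 2).val * (-1 : ℂ) ^ (∑ i, x i * w i : ZMod 2).val)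
          * (-1 : ℂ) ^ (∑ i, w i * v i : ZMod 2).val
          = (-1 : ℂ) ^ (∑ i, (u + x + v) i * w i : ZMod 2).val := by
      intro w
      rw [← char_add, ← char_add]
      apply congrArg (fun s : ZMod 2 => (-1 : ℂ) ^ s.val)
      rw [← Finset.sum_add_distrib, ← Finset.sum_add_distrib]
      refine Finset.sum_congr rfl fun i _ => ?_
      simp only [Pi.add_apply]
      ring
    have hterm : ∀ w : Fin n → ZMod 2,
        (H * Matrix.diagonal (fun y : Fin n → ZMod 2 => (-1 : ℂ) ^ (∑ i, x i * y i : ZMod 2).val)) u w * H w v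
          = (-1 : ℂ) ^ (∑ i, (u + x + v) i * w i : ZMod 2).val / (2 : ℂ) ^ n := by
      intro w
      rw [Matrix.mul_diagonal, hH, hH, ← hcomb w, ← hsq]
      ring
    simp_rw [hterm]
    rw [← Finset.sum_div, char_sum]
    have key : ∀ a b c : ZMod 2, a + b + c = 0 ↔ a = b + c := by decide
    have hiff : u + x + v = 0 ↔ u = x + v := by
      constructor
      · intro h; funext i; exact (key _ _ _).1 (congrFun h i)
      · intro h; funext i; exact (key _ _ _).2 (congrFun h i)
    by_cases h : u = x + v
    · rw [if_pos h, if_pos (hiff.2 h), div_self h2n]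
    · rw [if_neg h, if_neg (fun hh => h (hiff.1 hh)), zero_div]
  -- conjugation
  let U : (Matrix (Fin n → ZMod 2) (Fin n → ZMod 2) ℂ)ˣ := ⟨H, H, hHH, hHH⟩
  have hUc : (U : Matrix (Fin n → ZMod 2) (Fin n → ZMod 2) ℂ) = H := rfl
  have hUi : ((U⁻¹ : _ˣ) : Matrix (Fin n → ZMod 2) (Fin n → ZMod 2) ℂ) = H := rfl
  have hkey : (-(Complex.I * t * c)) • ρ =
      (U : Matrix _ _ ℂ) * ((-(Complex.I * t * c)) • D) * ((U⁻¹ : _ˣ) : Matrix _ _ ℂ) := by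
    rw [hUc, hUi, hρ', Matrix.mul_smul, Matrix.smul_mul]
  rw [hkey, Matrix.exp_units_conj U, hUc, hUi]
end

section
/- Let n > 0, f : ℤ₂ⁿ → ℤ, and let A u v = f(u + v) be the adjacency matrix of Cay(ℤ₂ⁿ, f). Then for every t ∈ ℝ and all u, v ∈ ℤ₂ⁿ, the transition amplitude has the spectral form: the (v,u) entry of exp(-(i t)·A) equals (1/2ⁿ) ∑_{g ∈ ℤ₂ⁿ} (-1)^{⟨g, u+v⟩} e^{-i t λ_g}, where λ_g = ∑_{x ∈ ℤ₂ⁿ} f(x) (-1)^{⟨g,x⟩}. -/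
open Matrix Finset

lemma neg_one_pow_val_add (a b : ZMod 2) :
    ((-1 : ℂ)) ^ (a + b).val = (-1 : ℂ) ^ a.val * (-1 : ℂ) ^ b.val := by
  rw [ZMod.val_add]
  have ha := ZMod.val_lt a; have hb := ZMod.val_lt b
  generalize a.val = x at *; generalize b.val = y at *
  interval_cases x <;> interval_cases y <;> norm_num

lemma neg_one_pow_val_sum {n : ℕ} (s : Finset (Fin n)) (h : Fin n → ZMod 2) :
    ((-1 : ℂ)) ^ (∑ i ∈ s, h i).val = ∏ i ∈ s, (-1 : ℂ) ^ (h i).val := by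
  induction s using Finset.induction with
  | empty => simp
  | @insert a s' hx ih => rw [Finset.sum_insert hx, Finset.prod_insert hx,
      neg_one_pow_val_add, ih]

lemma chi_sum {n : ℕ} (w : Fin n → ZMod 2) :
    ∑ g : Fin n → ZMod 2, (-1 : ℂ) ^ (∑ i, g i * w i : ZMod 2).val
      = if w = 0 then (2 : ℂ) ^ n else 0 := by
  split_ifs with hw
  · subst hw
    simp [ZMod.val, Finset.card_univ]
    rfl
  · obtain ⟨i, hi⟩ : ∃ i, w i ≠ 0 := by
      by_contra h; push_neg at h; exact hw (funext h)
    have hwi : w i = 1 := by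
      have : ∀ a : ZMod 2, a ≠ 0 → a = 1 := by decide
      exact this _ hi
    apply Finset.sum_ninvolution (fun g => g + (Pi.single i 1 : Fin n → ZMod 2))
    · intro a
      have hsum : (∑ j, (a + (Pi.single i 1 : Fin n → ZMod 2)) j * w j) = (∑ j, a j * w j) + 1 := by
        have : ∀ j, (a + (Pi.single i 1 : Fin n → ZMod 2)) j * w j = a j * w j + (Pi.single i 1 : Fin n → ZMod 2) j * w j := by
          intro j; simp [add_mul]
        rw [Finset.sum_congr rfl fun j _ => this j, Finset.sum_add_distrib]
        congr 1
        rw [Finset.sum_eq_single i]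
        · simp [hwi]
        · intro b _ hb; simp [Pi.single_apply, hb]
        · simp
      rw [hsum, neg_one_pow_val_add]
      norm_num [show ((1 : ZMod 2)).val = 1 from rfl]
    · intro a ha
      simp only [ne_eq]
      intro h
      have := congr_fun h i
      simp at this
    · intro a; exact Finset.mem_univ _
    · intro a
      funext j
      by_cases hj : j = i <;>
        simp [hj, Pi.single_apply, add_assoc, show (1 : ZMod 2) + 1 = 0 from rfl]

section Main
variable (n : ℕ)

noncomputable def chi' (g u : Fin n → ZMod 2) : ℂ := (-1 : ℂ) ^ (∑ i, g i * u i : ZMod 2).val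

lemma chi'_comm (g u : Fin n → ZMod 2) : chi' n g u = chi' n u g := by
  unfold chi'; congr 1; ring_nf; exact congrArg _ (Finset.sum_congr rfl fun i _ => mul_comm _ _)

lemma chi'_add_right (g u v : Fin n → ZMod 2) :
    chi' n g (u + v) = chi' n g u * chi' n g v := by
  unfold chi'
  rw [show (∑ i, g i * (u + v) i) = (∑ i, g i * u i) + (∑ i, g i * v i) by
    rw [← Finset.sum_add_distrib]; exact Finset.sum_congr rfl fun i _ => by simp [mul_add]]
  exact neg_one_pow_val_add _ _

lemma chi'_sum (w : Fin n → ZMod 2) :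
    ∑ g : Fin n → ZMod 2, chi' n g w = if w = 0 then (2 : ℂ) ^ n else 0 := chi_sum w

lemma self_add_self (w : Fin n → ZMod 2) : w + w = 0 := by
  funext i
  have : ∀ a : ZMod 2, a + a = 0 := by decide
  exact this _

noncomputable def Hm : Matrix (Fin n → ZMod 2) (Fin n → ZMod 2) ℂ := fun g u => chi' n g u

lemma triple (e : (Fin n → ZMod 2) → ℂ) (p q : Fin n → ZMod 2) :
    (Hm n * Matrix.diagonal e * (((2 : ℂ) ^ n)⁻¹ • Hm n)) p q
      = ((2 : ℂ) ^ n)⁻¹ * ∑ g, chi' n g (p + q) * e g := by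
  rw [Matrix.mul_apply, Finset.mul_sum]
  refine Finset.sum_congr rfl fun g _ => ?_
  rw [Matrix.mul_diagonal, Matrix.smul_apply]
  unfold Hm
  rw [chi'_add_right, show chi' n p g = chi' n g p from chi'_comm n p g]
  simp only [smul_eq_mul]
  ring

lemma HH : Hm n * Hm n = ((2 : ℂ) ^ n) • (1 : Matrix (Fin n → ZMod 2) (Fin n → ZMod 2) ℂ) := by
  ext p q
  rw [Matrix.mul_apply]
  have : ∀ g, Hm n p g * Hm n g q = chi' n g (p + q) := fun g => by
    unfold Hm; rw [chi'_add_right, show chi' n p g = chi' n g p from chi'_comm n p g]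
  rw [Finset.sum_congr rfl fun g _ => this g, chi'_sum]
  have hpq : p + q = 0 ↔ p = q := by
    constructor
    · intro h; have := congrArg (· + q) h; simpa [add_assoc, self_add_self] using this
    · rintro rfl; exact self_add_self n p
  by_cases h : p = q <;> simp [h, hpq, Matrix.one_apply, self_add_self]

end Main

theorem cubelike_amplitude_spectral_form
    (n : ℕ) (hn : 0 < n) (f : (Fin n → ZMod 2) → ℤ)
    (A : Matrix (Fin n → ZMod 2) (Fin n → ZMod 2) ℂ)
    (hA : ∀ u v, A u v = (f (u + v) : ℂ))
    (lam : (Fin n → ZMod 2) → ℂ)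
    (hlam : ∀ g, lam g = ∑ x : Fin n → ZMod 2,
      (f x : ℂ) * (-1 : ℂ) ^ (∑ i, g i * x i : ZMod 2).val)
    (t : ℝ) :
    ∀ u v : Fin n → ZMod 2,
      NormedSpace.exp ((-(Complex.I * t)) • A) v u =
        (1 / (2 : ℂ) ^ n) * ∑ g : Fin n → ZMod 2,
          (-1 : ℂ) ^ (∑ i, g i * (u + v) i : ZMod 2).val *
            Complex.exp (-(Complex.I * t) * lam g) := by
  intro u v
  have h2n : ((2 : ℂ) ^ n) ≠ 0 := pow_ne_zero _ two_ne_zero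
  set Hi : Matrix (Fin n → ZMod 2) (Fin n → ZMod 2) ℂ := ((2 : ℂ) ^ n)⁻¹ • Hm n with hHi
  have hright : Hm n * Hi = 1 := by
    rw [hHi, Matrix.mul_smul, HH, smul_smul, inv_mul_cancel₀ h2n, one_smul]
  have hdet : IsUnit (Hm n).det := Matrix.isUnit_det_of_right_inverse hright
  have hU : IsUnit (Hm n) := (Matrix.isUnit_iff_isUnit_det _).mpr hdet
  have hInv : (Hm n)⁻¹ = Hi := Matrix.inv_eq_right_inv hright
  have hlamx : ∀ g x, (f x : ℂ) * (-1 : ℂ) ^ (∑ i, g i * x i : ZMod 2).val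
      = (f x : ℂ) * chi' n g x := fun g x => rfl
  have hAd : ∀ p q : Fin n → ZMod 2,
      (∑ g, chi' n g (p + q) * lam g) = (2 : ℂ) ^ n * (f (p + q) : ℂ) := by
    intro p q
    have step1 : ∀ g, chi' n g (p + q) * lam g = ∑ x, (f x : ℂ) * chi' n g ((p + q) + x) := by
      intro g
      rw [hlam, Finset.mul_sum]
      refine Finset.sum_congr rfl fun x _ => ?_
      rw [hlamx, chi'_add_right n g (p + q) x]; ring
    rw [Finset.sum_congr rfl fun g _ => step1 g, Finset.sum_comm]
    have step2 : ∀ x, (∑ g, (f x : ℂ) * chi' n g ((p + q) + x))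
        = (f x : ℂ) * (if (p + q) + x = 0 then (2 : ℂ) ^ n else 0) := by
      intro x; rw [← Finset.mul_sum, chi'_sum]
    rw [Finset.sum_congr rfl fun x _ => step2 x]
    rw [Finset.sum_eq_single (p + q)]
    · simp [self_add_self]; ring
    · intro x _ hx
      have : (p + q) + x ≠ 0 := by
        intro h
        apply hx
        rw [← zero_add x, ← self_add_self n (p + q), add_assoc, h, add_zero]
      simp [this]
    · simp
  have hdecomp : (-(Complex.I * t)) • A
      = Hm n * Matrix.diagonal (fun g => -(Complex.I * (t : ℂ)) * lam g) * (Hm n)⁻¹ := by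
    rw [hInv]
    ext p q
    rw [triple, Matrix.smul_apply, hA]
    have : (∑ g, chi' n g (p + q) * (-(Complex.I * (t : ℂ)) * lam g))
        = -(Complex.I * (t : ℂ)) * ∑ g, chi' n g (p + q) * lam g := by
      rw [Finset.mul_sum]; exact Finset.sum_congr rfl fun g _ => by ring
    rw [this, hAd]
    field_simp
    ring
  rw [hdecomp, Matrix.exp_conj (Hm n) _ hU, Matrix.exp_diagonal, hInv, hHi, triple]
  rw [one_div]
  congr 1
  refine Finset.sum_congr rfl fun g _ => ?_
  rw [Pi.exp_def]
  rw [show chi' n g (v + u) = chi' n g (u + v) by rw [add_comm]]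
  unfold chi'
  rw [← Complex.exp_eq_exp_ℂ]
end

section
/- Let n > 0, f : ℤ₂ⁿ → ℤ, and let A u v = f(u + v) be the adjacency matrix of Cay(ℤ₂ⁿ, f). Then the graph is periodic with period π: for every vertex u ∈ ℤ₂ⁿ, the (u,u) entry of exp(-(i π)·A) has absolute value 1. -/
open Matrix

section Aux

variable {N : Type*} [Fintype N] [DecidableEq N]

/-- exponential of `z • P` for an involution `P`, at `z = -(iπ)m`. -/
lemma exp_smul_involution (P : Matrix N N ℂ) (hP : P * P = 1) (m : ℤ) :
    NormedSpace.exp ((-(Complex.I * Real.pi) * m) • P) = ((-1 : ℂ) ^ m) • 1 := by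
  letI : SeminormedRing (Matrix N N ℂ) := Matrix.linftyOpSemiNormedRing
  letI : NormedRing (Matrix N N ℂ) := Matrix.linftyOpNormedRing
  letI : NormedAlgebra ℂ (Matrix N N ℂ) := Matrix.linftyOpNormedAlgebra
  set ψfun : ℂ × ℂ → Matrix N N ℂ :=
    fun p => (((p.1 + p.2) / 2) • (1 : Matrix N N ℂ)) + (((p.1 - p.2) / 2) • P) with hψfun
  have hmul : ∀ p q : ℂ × ℂ, ψfun (p * q) = ψfun p * ψfun q := by
    intro p q
    simp only [hψfun, Prod.fst_mul, Prod.snd_mul, mul_add, add_mul, smul_mul_assoc,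
      Matrix.mul_smul, Matrix.one_mul, Matrix.mul_one, hP, smul_smul]
    match_scalars <;> ring
  let ψ : (ℂ × ℂ) →+* Matrix N N ℂ :=
    { toFun := ψfun
      map_one' := by simp only [hψfun]; match_scalars <;> norm_num
      map_mul' := hmul
      map_zero' := by simp only [hψfun]; match_scalars <;> norm_num
      map_add' := by intro p q; simp only [hψfun, Prod.fst_add, Prod.snd_add]
                     match_scalars <;> ring }
  have hψ : (ψ : ℂ × ℂ → Matrix N N ℂ) = ψfun := rfl
  have hcont : Continuous ψ := by
    rw [hψ, hψfun]
    fun_prop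
  set z : ℂ := -(Complex.I * Real.pi) * m with hz
  have h1 : z • P = ψ (z, -z) := by
    rw [hψ, hψfun]; match_scalars <;> ring
  have hez : Complex.exp z = (-1 : ℂ) ^ m := by
    rw [hz]
    have : -(Complex.I * (Real.pi : ℂ)) * m = (m : ℂ) * (-((Real.pi : ℂ) * Complex.I)) := by ring
    rw [this, Complex.exp_int_mul, Complex.exp_neg, Complex.exp_pi_mul_I]
    norm_num
  have heznz : Complex.exp (-z) = (-1 : ℂ) ^ m := by
    rw [Complex.exp_neg, hez, ← _root_.inv_zpow]
    norm_num
  have hexpPair : NormedSpace.exp ((z, -z) : ℂ × ℂ) = (((-1 : ℂ) ^ m), ((-1 : ℂ) ^ m)) := by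
    ext
    · rw [Prod.fst_exp, ← Complex.exp_eq_exp_ℂ]; exact hez
    · rw [Prod.snd_exp, ← Complex.exp_eq_exp_ℂ]; exact heznz
  calc NormedSpace.exp (z • P) = NormedSpace.exp (ψ (z, -z)) := by rw [h1]
    _ = ψ (NormedSpace.exp ((z, -z) : ℂ × ℂ)) := (NormedSpace.map_exp ψ hcont _).symm
    _ = ψ (((-1 : ℂ) ^ m), ((-1 : ℂ) ^ m)) := by rw [hexpPair]
    _ = ((-1 : ℂ) ^ m) • 1 := by rw [hψ, hψfun]; match_scalars <;> ring

lemma exp_sum_scalar {ι : Type*} (s : Finset ι) (g : ι → Matrix N N ℂ) (c : ι → ℂ)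
    (hcomm : ∀ i j, Commute (g i) (g j))
    (hexp : ∀ i, NormedSpace.exp (g i) = c i • 1) :
    NormedSpace.exp (∑ i ∈ s, g i) = (∏ i ∈ s, c i) • 1 := by
  classical
  induction s using Finset.induction_on with
  | empty => simp [NormedSpace.exp_zero]
  | insert a t ha ih =>
    rw [Finset.sum_insert ha, Finset.prod_insert ha,
      Matrix.exp_add_of_commute _ _ (Commute.sum_right _ _ _ (fun j _ => hcomm a j)), ih,
      hexp a, smul_mul_smul_comm, Matrix.one_mul]

end Aux

theorem cubelike_periodic_pi
    (n : ℕ) (hn : 0 < n) (f : (Fin n → ZMod 2) → ℤ)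
    (A : Matrix (Fin n → ZMod 2) (Fin n → ZMod 2) ℂ)
    (hA : ∀ u v, A u v = (f (u + v) : ℂ)) :
    ∀ u : Fin n → ZMod 2,
      ‖NormedSpace.exp ((-(Complex.I * Real.pi)) • A) u u‖ = 1 := by
  classical
  have hself : ∀ x : Fin n → ZMod 2, x + x = 0 := by
    intro x; funext i
    have : ∀ a : ZMod 2, a + a = 0 := by decide
    exact this (x i)
  set P : (Fin n → ZMod 2) → Matrix (Fin n → ZMod 2) (Fin n → ZMod 2) ℂ :=
    fun s => Matrix.of (fun u v => if u + v = s then 1 else 0) with hP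
  have hcancel : ∀ a b : Fin n → ZMod 2, a + (a + b) = b := by
    intro a b; rw [← add_assoc, hself, zero_add]
  have hiff : ∀ u w s : Fin n → ZMod 2, u + w = s ↔ w = u + s := by
    intro u w s
    constructor
    · rintro rfl; exact (hcancel u w).symm
    · rintro rfl; exact hcancel u s
  have hPmul : ∀ s t, P s * P t = P (s + t) := by
    intro s t
    ext u v
    simp only [hP, Matrix.mul_apply, Matrix.of_apply]
    have h2 : (u + s) + v = t ↔ u + v = s + t := by
      constructor
      · intro h3
        rw [← h3]
        have e : s + ((u + s) + v) = (s + s) + (u + v) := by abel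
        rw [e, hself, zero_add]
      · intro h3
        have e : (u + s) + v = s + (u + v) := by abel
        rw [e, h3]
        have e2 : s + (s + t) = (s + s) + t := by abel
        rw [e2, hself, zero_add]
    have hterm : ∀ w : Fin n → ZMod 2,
        (if u + w = s then (1:ℂ) else 0) * (if w + v = t then 1 else 0)
        = if w = u + s then (if u + v = s + t then (1:ℂ) else 0) else 0 := by
      intro w
      by_cases h : w = u + s
      · subst h
        simp [hiff, h2, add_assoc, add_left_comm]
      · simp [hiff, h]
    rw [Finset.sum_congr rfl (fun w _ => hterm w), Finset.sum_ite_eq' (Finset.univ) (u + s)]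
    simp
  have hPP : ∀ s, P s * P s = 1 := by
    intro s
    rw [hPmul, hself]
    ext u v
    have h0 : u + v = 0 ↔ u = v := by
      constructor
      · intro h
        have hc := hcancel u v
        rw [h, add_zero] at hc
        exact hc
      · rintro rfl; exact hself u
    simp only [hP, Matrix.of_apply, Matrix.one_apply, h0]
  have hAeq : (-(Complex.I * Real.pi)) • A
      = ∑ s : Fin n → ZMod 2, (-(Complex.I * Real.pi) * (f s : ℂ)) • P s := by
    ext u v
    simp only [Matrix.smul_apply, Matrix.sum_apply, hP, Matrix.of_apply, smul_eq_mul,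
      mul_ite, mul_one, mul_zero, hA]
    rw [Finset.sum_ite_eq (Finset.univ) (u + v)]
    simp
  have hcomm : ∀ s t, Commute ((-(Complex.I * Real.pi) * (f s : ℂ)) • P s)
      ((-(Complex.I * Real.pi) * (f t : ℂ)) • P t) := by
    intro s t
    apply Commute.smul_left
    apply Commute.smul_right
    unfold Commute SemiconjBy
    rw [hPmul, hPmul, add_comm]
  have hexp1 : ∀ s, NormedSpace.exp ((-(Complex.I * Real.pi) * (f s : ℂ)) • P s)
      = ((-1 : ℂ) ^ (f s)) • 1 := fun s => exp_smul_involution (P s) (hPP s) (f s)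
  have key : NormedSpace.exp ((-(Complex.I * Real.pi)) • A)
      = (∏ s : Fin n → ZMod 2, (-1 : ℂ) ^ (f s)) • 1 := by
    rw [hAeq]
    exact exp_sum_scalar _ _ _ hcomm hexp1
  intro u
  rw [key]
  simp only [Matrix.smul_apply, Matrix.one_apply_eq, smul_eq_mul, mul_one]
  rw [norm_prod]
  rw [Finset.prod_eq_one]
  intro s _
  rw [norm_zpow]
  simp
end

section
/- Let A be the 4×4 complex adjacency matrix of the 4-cycle given by A = !![0,1,1,0; 1,0,0,1; 1,0,0,1; 0,1,1,0]. Then perfect state transfer occurs at time π/2 between vertices 0 and 3 and between vertices 1 and 2: the (3,0) entry and the (2,1) entry of exp(-(i π/2)·A) each have absolute value 1. -/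
open Matrix

set_option maxHeartbeats 1000000

noncomputable section CycleAux

private def Pm : Matrix (Fin 4) (Fin 4) ℂ :=
  !![1,1,1,1; 1,-1,1,-1; 1,1,-1,-1; 1,-1,-1,1]

private def Qm : Matrix (Fin 4) (Fin 4) ℂ := (4:ℂ)⁻¹ • Pm

private lemma PQ : Pm * Qm = 1 := by
  ext i j
  fin_cases i <;> fin_cases j <;>
    simp [Pm, Qm, Matrix.mul_apply, Fin.sum_univ_four, Matrix.one_apply,
      Matrix.vecHead, Matrix.vecTail] <;> norm_num

private lemma QP : Qm * Pm = 1 := by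
  ext i j
  fin_cases i <;> fin_cases j <;>
    simp [Pm, Qm, Matrix.mul_apply, Fin.sum_univ_four, Matrix.one_apply,
      Matrix.vecHead, Matrix.vecTail] <;> norm_num

private lemma hPunit : IsUnit Pm := ⟨⟨Pm, Qm, PQ, QP⟩, rfl⟩

private lemma hPinv : Pm⁻¹ = Qm := Matrix.inv_eq_right_inv PQ

private lemma hconj (c : ℂ) :
    c • !![(0:ℂ),1,1,0; 1,0,0,1; 1,0,0,1; 0,1,1,0]
      = Pm * Matrix.diagonal ![2*c, 0, 0, -(2*c)] * Qm := by
  have h : Matrix.diagonal ![2*c, 0, 0, -(2*c)]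
      = !![2*c,0,0,0; 0,0,0,0; 0,0,0,0; 0,0,0,-(2*c)] := by
    ext i j
    fin_cases i <;> fin_cases j <;>
      simp [Matrix.diagonal, Matrix.vecHead, Matrix.vecTail]
  rw [h]
  ext i j
  fin_cases i <;> fin_cases j <;>
    (simp [Pm, Qm, Matrix.mul_apply, Fin.sum_univ_four, Matrix.vecHead, Matrix.vecTail]; try ring)

end CycleAux

theorem cycle4_pst
    (A : Matrix (Fin 4) (Fin 4) ℂ)
    (hA : A = !![0,1,1,0; 1,0,0,1; 1,0,0,1; 0,1,1,0]) :
    ‖NormedSpace.exp ((-(Complex.I * (Real.pi / 2))) • A) 3 0‖ = 1 ∧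
    ‖NormedSpace.exp ((-(Complex.I * (Real.pi / 2))) • A) 2 1‖ = 1 := by
  set c : ℂ := -(Complex.I * (Real.pi / 2)) with hc
  have he2 : NormedSpace.exp (2*c) = -1 := by
    rw [← Complex.exp_eq_exp_ℂ]
    have h2 : (2:ℂ) * c = -(Real.pi * Complex.I) := by rw [hc]; push_cast; ring
    rw [h2, Complex.exp_neg, Complex.exp_pi_mul_I]
    norm_num
  have he3 : NormedSpace.exp (-(2*c)) = -1 := by
    rw [← Complex.exp_eq_exp_ℂ]
    have h3 : -((2:ℂ) * c) = Real.pi * Complex.I := by rw [hc]; push_cast; ring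
    rw [h3, Complex.exp_pi_mul_I]
  have hv : NormedSpace.exp ![2*c, 0, 0, -(2*c)] = ![(-1:ℂ), 1, 1, -1] := by
    funext i
    rw [Pi.coe_exp]
    fin_cases i <;>
      simp [Matrix.vecHead, Matrix.vecTail, he2, he3, NormedSpace.exp_zero]
  have hexp : NormedSpace.exp (c • A)
      = Pm * Matrix.diagonal ![(-1:ℂ), 1, 1, -1] * Qm := by
    rw [hA, hconj c, ← hPinv, Matrix.exp_conj _ _ hPunit, Matrix.exp_diagonal, hv, hPinv]
  have h30 : NormedSpace.exp (c • A) 3 0 = -1 := by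
    rw [hexp]
    simp [Pm, Qm, Matrix.mul_apply, Fin.sum_univ_four, Matrix.diagonal,
      Matrix.vecHead, Matrix.vecTail]
    norm_num [Fin.ext_iff, show ((3:Fin 4):ℕ) = 3 from rfl]
  have h21 : NormedSpace.exp (c • A) 2 1 = -1 := by
    rw [hexp]
    simp [Pm, Qm, Matrix.mul_apply, Fin.sum_univ_four, Matrix.diagonal,
      Matrix.vecHead, Matrix.vecTail]
    norm_num [Fin.ext_iff, show ((3:Fin 4):ℕ) = 3 from rfl]
  rw [h30, h21]
  simp
end

section
/- Let A be the 4×4 complex adjacency matrix of the 4-cycle given by A = !![0,1,1,0; 1,0,0,1; 1,0,0,1; 0,1,1,0]. Then the graph is periodic with period π: for every u ∈ Fin 4, the (u,u) entry of exp(-(i π)·A) has absolute value 1. -/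
open Matrix

theorem cycle4_periodic_pi
    (A : Matrix (Fin 4) (Fin 4) ℂ)
    (hA : A = !![0,1,1,0; 1,0,0,1; 1,0,0,1; 0,1,1,0]) :
    ∀ u : Fin 4,
      ‖NormedSpace.exp ((-(Complex.I * Real.pi)) • A) u u‖ = 1 := by
  intro u
  have hPQ : (!![1,1,1,0; 1,-1,0,1; 1,-1,0,-1; 1,1,-1,0] : Matrix (Fin 4) (Fin 4) ℂ) *
      !![1/4,1/4,1/4,1/4; 1/4,-1/4,-1/4,1/4; 1/2,0,0,-1/2; 0,1/2,-1/2,0] = 1 := by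
    ext i j
    fin_cases i <;> fin_cases j <;>
      simp [Matrix.mul_apply, Fin.sum_univ_four, Matrix.one_apply] <;> norm_num
  have hQP : (!![1/4,1/4,1/4,1/4; 1/4,-1/4,-1/4,1/4; 1/2,0,0,-1/2; 0,1/2,-1/2,0]
      : Matrix (Fin 4) (Fin 4) ℂ) * !![1,1,1,0; 1,-1,0,1; 1,-1,0,-1; 1,1,-1,0] = 1 := by
    ext i j
    fin_cases i <;> fin_cases j <;>
      simp [Matrix.mul_apply, Fin.sum_univ_four, Matrix.one_apply] <;> norm_num
  set U : (Matrix (Fin 4) (Fin 4) ℂ)ˣ :=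
    ⟨!![1,1,1,0; 1,-1,0,1; 1,-1,0,-1; 1,1,-1,0],
     !![1/4,1/4,1/4,1/4; 1/4,-1/4,-1/4,1/4; 1/2,0,0,-1/2; 0,1/2,-1/2,0], hPQ, hQP⟩ with hUdef
  set D : Matrix (Fin 4) (Fin 4) ℂ :=
    Matrix.diagonal ![-(2 * Real.pi * Complex.I), 2 * Real.pi * Complex.I, 0, 0] with hD
  have hDval : D = !![-(2 * Real.pi * Complex.I),0,0,0; 0,2 * Real.pi * Complex.I,0,0;
      0,0,0,0; 0,0,0,0] := by
    ext i j
    fin_cases i <;> fin_cases j <;>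
      simp [hD, Matrix.diagonal_apply, Matrix.vecHead, Matrix.vecTail]
  have hB : (-(Complex.I * Real.pi)) • A =
      (U : Matrix (Fin 4) (Fin 4) ℂ) * D * (↑U⁻¹ : Matrix (Fin 4) (Fin 4) ℂ) := by
    show (-(Complex.I * Real.pi)) • A =
      (!![1,1,1,0; 1,-1,0,1; 1,-1,0,-1; 1,1,-1,0] : Matrix (Fin 4) (Fin 4) ℂ) * D *
      !![1/4,1/4,1/4,1/4; 1/4,-1/4,-1/4,1/4; 1/2,0,0,-1/2; 0,1/2,-1/2,0]
    subst hA
    rw [hDval]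
    ext i j
    fin_cases i <;> fin_cases j <;>
      simp [Matrix.mul_apply, Fin.sum_univ_four] <;> ring
  have h2 : Complex.exp (2 * Real.pi * Complex.I) = 1 := Complex.exp_two_pi_mul_I
  have hexpD : NormedSpace.exp D = 1 := by
    rw [hD, Matrix.exp_diagonal]
    have hfun : NormedSpace.exp
        ![-(2 * (Real.pi:ℂ) * Complex.I), 2 * Real.pi * Complex.I, 0, 0] = ![1, 1, 1, 1] := by
      rw [Pi.exp_def]
      funext i
      fin_cases i <;>
        simp [← Complex.exp_eq_exp_ℂ, Complex.exp_neg, h2, Complex.exp_zero]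
    rw [hfun]
    ext i j
    rw [Matrix.diagonal_apply, Matrix.one_apply]
    split <;> simp [Matrix.cons_val_fin_one]
    · rename_i h
      fin_cases i <;> rfl
  have hexp : NormedSpace.exp ((-(Complex.I * Real.pi)) • A) = 1 := by
    rw [hB, Matrix.exp_units_conj, hexpD, mul_one]
    exact_mod_cast U.mul_inv
  rw [hexp, Matrix.one_apply_eq]
  exact norm_one
end

section
/- Let f : ℤ₂³ → ℤ be the indicator function of the set {001, 010, 100} (the connection set of the 3-dimensional hypercube Q₃), and let A u v = f(u + v) be the adjacency matrix of Cay(ℤ₂³, f). Then perfect state transfer occurs at time π/2 between every pair of antipodal vertices: for all u, v ∈ ℤ₂³ with u + v = 111, the (v,u) entry of exp(-(i π/2)·A) has absolute value 1. -/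
open Matrix

abbrev G3 := Fin 3 → ZMod 2
def dotn (u v : G3) : ℕ := ∑ i, (u i).val * (v i).val
def Hz : Matrix G3 G3 ℤ := Matrix.of fun u v => (-1)^(dotn u v)
def Az : Matrix G3 G3 ℤ := Matrix.of fun u v =>
  if u+v = ![0,0,1] ∨ u+v = ![0,1,0] ∨ u+v = ![1,0,0] then 1 else 0
def dz (x : G3) : ℤ := (-1:ℤ)^(dotn x ![0,0,1]) + (-1:ℤ)^(dotn x ![0,1,0]) + (-1:ℤ)^(dotn x ![1,0,0])
def sz (x : G3) : ℤ := (-1:ℤ)^(dotn x ![1,1,1])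
lemma key1 : Hz * Az = Matrix.diagonal dz * Hz := by decide
lemma key2 : Hz * Hz = Matrix.diagonal (fun _ => (8:ℤ)) := by decide
lemma key3 : Hz * Matrix.diagonal sz * Hz
    = Matrix.of (fun u v => if u+v = ![1,1,1] then (8:ℤ) else 0) := by decide
lemma key4 : ∀ x, dz x = 3 ∧ sz x = 1 ∨ dz x = 1 ∧ sz x = -1 ∨ dz x = -1 ∧ sz x = 1 ∨ dz x = -3 ∧ sz x = -1 := by decide

lemma exp_base : Complex.exp (-(Complex.I * (Real.pi / 2))) = -Complex.I := by
  have h : (-(Complex.I * (Real.pi / 2))) = ((-(Real.pi/2) : ℝ) : ℂ) * Complex.I := by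
    push_cast; ring
  rw [h, Complex.exp_mul_I, ← Complex.ofReal_cos, ← Complex.ofReal_sin]
  rw [Real.cos_neg, Real.sin_neg, Real.cos_pi_div_two, Real.sin_pi_div_two]
  simp

lemma exp_val (n : ℤ) : Complex.exp (-(Complex.I * (Real.pi / 2)) * (n : ℂ)) = (-Complex.I) ^ n := by
  rw [mul_comm, Complex.exp_int_mul, exp_base]

lemma negI_three : (-Complex.I)^(3:ℤ) = Complex.I := by
  norm_num [zpow_ofNat, pow_succ, Complex.I_mul_I]

lemma negI_one : (-Complex.I)^(1:ℤ) = -Complex.I := by norm_num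

lemma negI_negone : (-Complex.I)^(-1:ℤ) = Complex.I := by
  rw [show (-1:ℤ) = -(1:ℤ) by norm_num, _root_.zpow_neg, zpow_one, inv_neg, Complex.inv_I, neg_neg]

lemma negI_negthree : (-Complex.I)^(-3:ℤ) = -Complex.I := by
  rw [show (-3:ℤ) = -(3:ℤ) by norm_num, _root_.zpow_neg]
  norm_num [zpow_ofNat, pow_succ, Complex.I_mul_I, inv_neg, Complex.inv_I]

lemma exp_entry (x : G3) :
    Complex.exp (-(Complex.I * (Real.pi / 2)) * ((dz x : ℤ) : ℂ)) = Complex.I * ((sz x : ℤ) : ℂ) := by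
  rw [exp_val]
  rcases key4 x with ⟨h1, h2⟩ | ⟨h1, h2⟩ | ⟨h1, h2⟩ | ⟨h1, h2⟩ <;> rw [h1, h2]
  · rw [negI_three]; norm_num
  · rw [negI_one]; push_cast; ring
  · rw [negI_negone]; norm_num
  · rw [negI_negthree]; push_cast; ring

theorem hypercube_Q3_antipodal_pst
    (f : (Fin 3 → ZMod 2) → ℤ)
    (hf : ∀ y, f y = if y = ![0,0,1] ∨ y = ![0,1,0] ∨ y = ![1,0,0] then 1 else 0)
    (A : Matrix (Fin 3 → ZMod 2) (Fin 3 → ZMod 2) ℂ)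
    (hA : ∀ u v, A u v = (f (u + v) : ℂ)) :
    ∀ u v : Fin 3 → ZMod 2, u + v = ![1,1,1] →
      ‖NormedSpace.exp ((-(Complex.I * (Real.pi / 2))) • A) v u‖ = 1 := by
  intro u v huv
  set c : ℂ := -(Complex.I * (Real.pi / 2)) with hc
  set φ := Int.castRingHom ℂ with hφ
  set Hc : Matrix G3 G3 ℂ := Hz.map ⇑φ with hHc
  have hA' : A = Az.map ⇑φ := by
    ext a b
    rw [hA, hf]
    simp [Az, Matrix.map_apply, hφ, apply_ite (Int.cast : ℤ → ℂ)]
  have hHH : Hc * Hc = Matrix.diagonal (fun _ => (8:ℂ)) := by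
    have := congrArg (fun M => M.map ⇑φ) key2
    simpa [Matrix.map_mul, ← hHc, Matrix.diagonal_map (map_zero φ), Function.comp] using this
  have h1 : Hc * ((1/8 : ℂ) • Hc) = 1 := by
    rw [Matrix.mul_smul, hHH]
    ext a b
    by_cases h : a = b <;> simp [Matrix.diagonal_apply, Matrix.one_apply, h]
  have h2 : ((1/8:ℂ) • Hc) * Hc = 1 := by
    rw [Matrix.smul_mul, hHH]
    ext a b
    by_cases h : a = b <;> simp [Matrix.diagonal_apply, Matrix.one_apply, h]
  set U : (Matrix G3 G3 ℂ)ˣ := ⟨Hc, (1/8:ℂ) • Hc, h1, h2⟩ with hU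
  have hUinv : ((U⁻¹ : (Matrix G3 G3 ℂ)ˣ) : Matrix G3 G3 ℂ) = (1/8:ℂ) • Hc := rfl
  have hUc : ((U : (Matrix G3 G3 ℂ)ˣ) : Matrix G3 G3 ℂ) = Hc := rfl
  have hHA : Hc * A = Matrix.diagonal (fun x => ((dz x : ℤ) : ℂ)) * Hc := by
    have := congrArg (fun M => M.map ⇑φ) key1
    rw [hA']
    simpa [Matrix.map_mul, ← hHc, Matrix.diagonal_map (map_zero φ), Function.comp] using this
  have hconj : A = ((U⁻¹ : (Matrix G3 G3 ℂ)ˣ) : Matrix G3 G3 ℂ)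
      * Matrix.diagonal (fun x => ((dz x : ℤ) : ℂ)) * ((U : (Matrix G3 G3 ℂ)ˣ) : Matrix G3 G3 ℂ) := by
    calc A = (((U⁻¹ : (Matrix G3 G3 ℂ)ˣ) : Matrix G3 G3 ℂ) * Hc) * A := by
            rw [hUinv, h2, Matrix.one_mul]
    _ = ((U⁻¹ : (Matrix G3 G3 ℂ)ˣ) : Matrix G3 G3 ℂ) * (Hc * A) := by rw [Matrix.mul_assoc]
    _ = _ := by rw [hHA, hUc, Matrix.mul_assoc]
  have hsmul : c • A = ((U⁻¹ : (Matrix G3 G3 ℂ)ˣ) : Matrix G3 G3 ℂ)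
      * Matrix.diagonal (fun x => c * ((dz x : ℤ) : ℂ)) * ((U : (Matrix G3 G3 ℂ)ˣ) : Matrix G3 G3 ℂ) := by
    rw [hconj, show (fun x => c * ((dz x : ℤ) : ℂ)) = c • (fun x => ((dz x : ℤ) : ℂ)) from rfl,
      Matrix.diagonal_smul, Matrix.mul_smul, Matrix.smul_mul]
  have hexp : NormedSpace.exp (c • A)
      = ((U⁻¹ : (Matrix G3 G3 ℂ)ˣ) : Matrix G3 G3 ℂ)
      * Matrix.diagonal (fun x => Complex.exp (c * ((dz x : ℤ) : ℂ)))
      * ((U : (Matrix G3 G3 ℂ)ˣ) : Matrix G3 G3 ℂ) := by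
    rw [hsmul, Matrix.exp_units_conj', Matrix.exp_diagonal]
    congr 2
    funext x
    simp [Pi.exp_def, ← Complex.exp_eq_exp_ℂ]
  have hdiag : (fun x => Complex.exp (c * ((dz x : ℤ) : ℂ)))
      = fun x => Complex.I * ((sz x : ℤ) : ℂ) := by
    funext x; exact exp_entry x
  have hPP : Hc * Matrix.diagonal (fun x => ((sz x : ℤ) : ℂ)) * Hc
      = Matrix.of (fun a b => if a + b = ![1,1,1] then (8:ℂ) else 0) := by
    have h3 := congrArg (fun M => M.map ⇑φ) key3
    simp only [Matrix.map_mul, Matrix.diagonal_map (map_zero φ)] at h3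
    rw [← hHc] at h3
    have h4 : (Hc * Matrix.diagonal fun x => ((sz x : ℤ) : ℂ)) * Hc
        = (Matrix.of (fun u v => if u + v = ![1,1,1] then (8:ℤ) else 0)).map ⇑φ := h3
    rw [h4]
    ext a b
    simp [Matrix.map_apply, hφ, apply_ite (Int.cast : ℤ → ℂ)]
  have hd : Matrix.diagonal (fun x => Complex.I * ((sz x : ℤ) : ℂ))
      = Complex.I • Matrix.diagonal (fun x => ((sz x : ℤ) : ℂ)) := by
    rw [show (fun x => Complex.I * ((sz x : ℤ) : ℂ)) = Complex.I • (fun x => ((sz x : ℤ) : ℂ)) from rfl,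
      Matrix.diagonal_smul]
  have hfinal : NormedSpace.exp (c • A)
      = (Complex.I * (1/8:ℂ)) • Matrix.of (fun a b => if a + b = ![1,1,1] then (8:ℂ) else 0) := by
    rw [hexp, hdiag, hd, hUinv, hUc]
    have : ((1/8:ℂ) • Hc) * (Complex.I • Matrix.diagonal (fun x => ((sz x : ℤ) : ℂ))) * Hc
        = (Complex.I * (1/8:ℂ)) • (Hc * Matrix.diagonal (fun x => ((sz x : ℤ) : ℂ)) * Hc) := by
      simp only [Matrix.smul_mul, Matrix.mul_smul, smul_smul]
    rw [this, hPP]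
  rw [hfinal]
  have hvu : v + u = ![1,1,1] := by rw [add_comm]; exact huv
  simp only [Matrix.smul_apply, Matrix.of_apply, hvu, if_pos, smul_eq_mul]
  rw [norm_mul, norm_mul]
  norm_num [Complex.norm_I, map_div₀]
end

section
/- Let f : ℤ₂³ → ℤ be the indicator function of the set {001, 010, 011, 100, 111}, and let A u v = f(u + v) be the adjacency matrix of Cay(ℤ₂³, f). Then perfect state transfer occurs at time π/2 between every pair of vertices u, v with u + v = 011: for all u, v ∈ ℤ₂³ with u + v = 011, the (v,u) entry of exp(-(i π/2)·A) has absolute value 1. In particular, PST occurs between the pairs {000,011}, {001,010}, {100,111}, {101,110}. -/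
open Matrix

section Aux

/-- exp of `-(I*θ) • M` for an involution `M` in a complex Banach algebra. -/
theorem exp_neg_I_theta_smul {𝔸 : Type*} [NormedRing 𝔸] [NormedAlgebra ℂ 𝔸]
    [CompleteSpace 𝔸] (M : 𝔸) (h : M * M = 1) (θ : ℝ) :
    NormedSpace.exp ((-(Complex.I * θ)) • M) =
      (Complex.cos θ) • (1 : 𝔸) + (-(Complex.I * Complex.sin θ)) • M := by
  have hM2 : M ^ 2 = 1 := by rw [sq, h]
  have hc2 : (-(Complex.I * θ)) ^ 2 = -((θ : ℂ) ^ 2) := by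
    rw [neg_pow, mul_pow, Complex.I_sq]; ring
  rw [NormedSpace.exp_eq_tsum (𝕂 := ℂ)]
  refine HasSum.tsum_eq (HasSum.even_add_odd ?_ ?_)
  · have := (Complex.hasSum_cos (θ : ℂ)).smul_const (1 : 𝔸)
    convert this using 2 with k
    rw [smul_pow, pow_mul, pow_mul, hM2, one_pow, hc2, smul_smul]
    congr 1
    rw [neg_pow, div_eq_inv_mul]
    ring
  · have := ((Complex.hasSum_sin (θ : ℂ)).mul_left (-Complex.I)).smul_const M
    have h2 : (-(Complex.I * Complex.sin θ)) • M =
        (-Complex.I * Complex.sin (θ : ℂ)) • M := by ring_nf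
    rw [h2]
    convert this using 2 with k
    rw [smul_pow, show M ^ (2 * k + 1) = M by rw [pow_succ, pow_mul, hM2, one_pow, one_mul],
      pow_succ, pow_mul, hc2, smul_smul]
    congr 1
    rw [neg_pow, div_eq_inv_mul]
    ring

/-- Matrix version at θ = π/2. -/
theorem matrix_exp_involution {m : Type*} [Fintype m] [DecidableEq m]
    (M : Matrix m m ℂ) (h : M * M = 1) :
    NormedSpace.exp ((-(Complex.I * (Real.pi / 2))) • M) = (-Complex.I) • M := by
  letI : SeminormedRing (Matrix m m ℂ) := Matrix.linftyOpSemiNormedRing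
  letI : NormedRing (Matrix m m ℂ) := Matrix.linftyOpNormedRing
  letI : NormedAlgebra ℂ (Matrix m m ℂ) := Matrix.linftyOpNormedAlgebra
  have hs : (-(Complex.I * (Real.pi / 2 : ℝ))) • M
      = (-(Complex.I * ((Real.pi / 2 : ℝ) : ℂ))) • M := by
    push_cast; ring_nf
  calc NormedSpace.exp ((-(Complex.I * (Real.pi / 2))) • M)
      = NormedSpace.exp ((-(Complex.I * ((Real.pi / 2 : ℝ) : ℂ))) • M) := by
        rw [← hs]; norm_num
    _ = (Complex.cos (Real.pi / 2 : ℝ)) • (1 : Matrix m m ℂ)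
        + (-(Complex.I * Complex.sin (Real.pi / 2 : ℝ))) • M :=
        exp_neg_I_theta_smul M h _
    _ = (-Complex.I) • M := by
        rw [← Complex.ofReal_cos, ← Complex.ofReal_sin, Real.cos_pi_div_two,
          Real.sin_pi_div_two]
        simp


abbrev G2 : Type := Fin 3 → ZMod 2

/-- translation matrix -/
def Tm (s : G2) : Matrix G2 G2 ℂ := Matrix.of fun u v => if u + v = s then 1 else 0

lemma G2.self_add : ∀ x : G2, x + x = 0 := by decide

lemma Tm_mul (s t : G2) : Tm s * Tm t = Tm (s + t) := by
  have hself : ∀ x : G2, x + x = 0 := G2.self_add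
  ext u v
  simp only [Tm, Matrix.mul_apply, Matrix.of_apply]
  rw [Finset.sum_eq_single (u + s)]
  · have h1 : u + (u + s) = s := by rw [← add_assoc, hself, zero_add]
    have h2 : (u + s + v = t) ↔ (u + v = s + t) := by
      constructor
      · intro h
        rw [← h, show s + (u + s + v) = u + v + (s + s) from by abel, hself, add_zero]
      · intro h
        rw [show u + s + v = s + (u + v) from by abel, h,
          show s + (s + t) = (s + s) + t from by abel, hself, zero_add]
    simp [h1, h2]
  · intro w _ hw
    have hne : ¬ (u + w = s) := fun hc => hw (by rw [← hc, ← add_assoc, hself, zero_add])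
    simp [hne]
  · intro h; exact absurd (Finset.mem_univ _) h

lemma Tm_zero : Tm 0 = 1 := by
  have h : ∀ x y : G2, x + y = 0 ↔ x = y := by decide
  ext u v
  simp [Tm, Matrix.one_apply, h u v]

lemma Tm_sq (s : G2) : Tm s * Tm s = 1 := by
  rw [Tm_mul, G2.self_add, Tm_zero]

lemma Tm_comm (s t : G2) : Commute (Tm s) (Tm t) := by
  unfold Commute SemiconjBy
  rw [Tm_mul, Tm_mul, add_comm]

end Aux

theorem augmented_cube_pst
    (f : (Fin 3 → ZMod 2) → ℤ)
    (hf : ∀ y, f y = if y = ![0,0,1] ∨ y = ![0,1,0] ∨ y = ![0,1,1] ∨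
      y = ![1,0,0] ∨ y = ![1,1,1] then 1 else 0)
    (A : Matrix (Fin 3 → ZMod 2) (Fin 3 → ZMod 2) ℂ)
    (hA : ∀ u v, A u v = (f (u + v) : ℂ)) :
    ∀ u v : Fin 3 → ZMod 2, u + v = ![0,1,1] →
      ‖NormedSpace.exp ((-(Complex.I * (Real.pi / 2))) • A) v u‖ = 1 := by
  intro u v huv
  set c : ℂ := -(Complex.I * (Real.pi / 2)) with hc
  set a1 : G2 := ![0,0,1]
  set a2 : G2 := ![0,1,0]
  set a3 : G2 := ![0,1,1]
  set a4 : G2 := ![1,0,0]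
  set a5 : G2 := ![1,1,1]
  have hdec : ∀ y : G2, (if y = a1 ∨ y = a2 ∨ y = a3 ∨ y = a4 ∨ y = a5 then (1:ℤ) else 0)
      = (if y = a1 then 1 else 0) + (if y = a2 then 1 else 0) + (if y = a3 then 1 else 0)
        + (if y = a4 then 1 else 0) + (if y = a5 then 1 else 0) := by decide
  have hAeq : A = Tm a1 + (Tm a2 + (Tm a3 + (Tm a4 + Tm a5))) := by
    ext x y
    rw [hA, hf, hdec]
    push_cast [apply_ite (fun z : ℤ => (z : ℂ))]
    simp [Tm]
    ring
  have hcomm : ∀ s t : G2, Commute (c • Tm s) (c • Tm t) :=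
    fun s t => ((Tm_comm s t).smul_left c).smul_right c
  have hexp : ∀ s : G2, NormedSpace.exp (c • Tm s) = (-Complex.I) • Tm s :=
    fun s => matrix_exp_involution (Tm s) (Tm_sq s)
  have key : NormedSpace.exp (c • A)
      = ((-Complex.I) • Tm a1) * (((-Complex.I) • Tm a2) * (((-Complex.I) • Tm a3)
        * (((-Complex.I) • Tm a4) * ((-Complex.I) • Tm a5)))) := by
    rw [hAeq]
    simp only [smul_add]
    rw [Matrix.exp_add_of_commute _ _ (((hcomm a1 a2).add_right
        ((hcomm a1 a3).add_right ((hcomm a1 a4).add_right (hcomm a1 a5)))))]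
    rw [Matrix.exp_add_of_commute _ _ (((hcomm a2 a3).add_right
        ((hcomm a2 a4).add_right (hcomm a2 a5))))]
    rw [Matrix.exp_add_of_commute _ _ (((hcomm a3 a4).add_right (hcomm a3 a5)))]
    rw [Matrix.exp_add_of_commute _ _ (hcomm a4 a5)]
    rw [hexp, hexp, hexp, hexp, hexp]
  have hsum : a1 + (a2 + (a3 + (a4 + a5))) = ![0,1,1] := by decide
  have key2 : NormedSpace.exp (c • A) = (-Complex.I) • Tm ![0,1,1] := by
    rw [key]
    simp only [Matrix.smul_mul, Matrix.mul_smul, Tm_mul, smul_smul, hsum]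
    congr 1
    simp [Complex.I_mul_I]
  rw [key2]
  have hvu : v + u = ![0,1,1] := by rw [add_comm]; exact huv
  simp [Tm, hvu]
end
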